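/- Suppose x, u ∈ GF(2)^n and there exists an index i with 1 ≤ i ≤ n-1 such that (x_i, x_{i+1}) = (0,0) and (u_i, u_{i+1}) = (1,1), or (x_i, x_{i+1}) = (1,1) and (u_i, u_{i+1}) = (0,0). Then the grain error-balls B_{t,G}(x) and B_{t,G}(u) are disjoint. -/

import Mathlib

/-- `e` is a `t`-grain-error for `x`: weight at most `t`, `e₁ = 0`, and an error at
position `i` (2 ≤ i ≤ n) requires `x_i ≠ x_{i-1}`. (0-indexed here.) -/
def grainError {n : ℕ} (t : ℕ) (x e : Fin n → ZMod 2) : Prop :=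
  (Finset.univ.filter fun i => e i ≠ 0).card ≤ t ∧
  (∀ i : Fin n, (i : ℕ) = 0 → e i = 0) ∧
  (∀ i : Fin n, 0 < (i : ℕ) → e i ≠ 0 →
    x i ≠ x ⟨(i : ℕ) - 1, lt_of_le_of_lt (Nat.sub_le _ _) i.isLt⟩)

/-- The grain error-ball `B_{t,G}(x)`. -/
def grainBall {n : ℕ} (t : ℕ) (x : Fin n → ZMod 2) : Set (Fin n → ZMod 2) :=
  {y | ∃ e, grainError t x e ∧ y = x + e}

/-- The number of runs of a binary vector. -/
def runs {n : ℕ} (x : Fin n → ZMod 2) : ℕ :=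
  (if n = 0 then 0 else 1) +
  (Finset.univ.filter fun i : Fin n =>
    0 < (i : ℕ) ∧ x i ≠ x ⟨(i : ℕ) - 1, lt_of_le_of_lt (Nat.sub_le _ _) i.isLt⟩).card

/-- If `x` has `(0,0)` where `u` has `(1,1)` at some adjacent pair of positions (or
vice versa), their grain error-balls are disjoint. -/
theorem stmt2 {n t : ℕ} (x u : Fin n → ZMod 2) (i : ℕ) (hi : i + 1 < n)
    (h : (x ⟨i, by omega⟩ = 0 ∧ x ⟨i + 1, hi⟩ = 0 ∧
            u ⟨i, by omega⟩ = 1 ∧ u ⟨i + 1, hi⟩ = 1) ∨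
         (x ⟨i, by omega⟩ = 1 ∧ x ⟨i + 1, hi⟩ = 1 ∧
            u ⟨i, by omega⟩ = 0 ∧ u ⟨i + 1, hi⟩ = 0)) :
    Disjoint (grainBall t x) (grainBall t u) := by
  rw [Set.disjoint_left]
  rintro y ⟨e, ⟨_, _, he⟩, rfl⟩ ⟨f, ⟨_, _, hf⟩, hy⟩
  set j : Fin n := ⟨i + 1, hi⟩ with hj
  have hjpred : (⟨(j : ℕ) - 1, lt_of_le_of_lt (Nat.sub_le _ _) j.isLt⟩ : Fin n)
      = ⟨i, by omega⟩ := by ext; simp [hj]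
  have hxs : x j = x ⟨i, by omega⟩ := by rcases h with ⟨a,b,c,d⟩|⟨a,b,c,d⟩ <;> rw [a,b]
  have hus : u j = u ⟨i, by omega⟩ := by rcases h with ⟨a,b,c,d⟩|⟨a,b,c,d⟩ <;> rw [c,d]
  have hej : e j = 0 := by
    by_contra hne
    exact he j (by simp [hj]) hne (by rw [hjpred]; exact hxs)
  have hfj : f j = 0 := by
    by_contra hne
    exact hf j (by simp [hj]) hne (by rw [hjpred]; exact hus)
  have := congrFun hy j
  simp only [Pi.add_apply, hej, hfj, add_zero] at this
  rcases h with ⟨a,b,c,d⟩|⟨a,b,c,d⟩ <;> rw [b, d] at this <;> exact absurd this (by decide)
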